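/- In a polar algebra, tr(L(x)²) = h(x₀,x₀)·dim A₁ + 2·h(x₁,x₁)·dim A₀ for all x = x₀ + x₁ with x₀ ∈ A₀, x₁ ∈ A₁. -/

import Mathlib

/-- In a polar algebra,
`tr(L(x)²) = h(x₀,x₀)·dim A₁ + 2·h(x₁,x₁)·dim A₀` for `x = x₀ + x₁`. -/
theorem polar_trace_formula
    {A : Type*} [AddCommGroup A] [Module ℝ A] [FiniteDimensional ℝ A]
    (mul : A →ₗ[ℝ] A →ₗ[ℝ] A)
    (hcomm : ∀ x y : A, mul x y = mul y x)
    (h : A →ₗ[ℝ] A →ₗ[ℝ] ℝ)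
    (hsymm : ∀ x y : A, h x y = h y x)
    (hpos : ∀ x : A, x ≠ 0 → 0 < h x x)
    (hinv : ∀ x y z : A, h (mul x y) z = h x (mul y z))
    (A₀ A₁ : Submodule ℝ A)
    (hA₀ : A₀ ≠ ⊥) (hA₁ : A₁ ≠ ⊥)
    (hsum : A₀ ⊔ A₁ = ⊤) (hind : A₀ ⊓ A₁ = ⊥)
    (horth : ∀ x ∈ A₀, ∀ y ∈ A₁, h x y = 0)
    (hmul00 : ∀ x ∈ A₀, ∀ y ∈ A₀, mul x y = 0)
    (hmul11 : ∀ x ∈ A₁, ∀ y ∈ A₁, mul x y ∈ A₀)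
    (hpolar : ∀ x ∈ A₀, ∀ y ∈ A₁, mul x (mul x y) = h x x • y) :
    ∀ x₀ ∈ A₀, ∀ x₁ ∈ A₁,
      LinearMap.trace ℝ A (mul (x₀ + x₁) ∘ₗ mul (x₀ + x₁))
        = h x₀ x₀ * (Module.finrank ℝ A₁ : ℝ) + 2 * h x₁ x₁ * (Module.finrank ℝ A₀ : ℝ) := by
  intro x₀ hx₀ x₁ hx₁
  have hc : IsCompl A₀ A₁ := ⟨disjoint_iff.mpr hind, codisjoint_iff.mpr hsum⟩
  set π₀ : A →ₗ[ℝ] A := A₀.subtype ∘ₗ A₀.projectionOnto A₁ hc with hπ₀def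
  set π₁ : A →ₗ[ℝ] A := A₁.subtype ∘ₗ A₁.projectionOnto A₀ hc.symm with hπ₁def
  have hπ₀₀ : ∀ a ∈ A₀, π₀ a = a := fun a ha => by
    simpa [hπ₀def] using congrArg Subtype.val
      (Submodule.projectionOnto_apply_left hc ⟨a, ha⟩)
  have hπ₀₁ : ∀ b ∈ A₁, π₀ b = 0 := fun b hb => by
    simp [hπ₀def, Submodule.projectionOnto_apply_of_mem_right hc hb]
  have hπ₁₁ : ∀ b ∈ A₁, π₁ b = b := fun b hb => by
    simpa [hπ₁def] using congrArg Subtype.val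
      (Submodule.projectionOnto_apply_left hc.symm ⟨b, hb⟩)
  have hπ₁₀ : ∀ a ∈ A₀, π₁ a = 0 := fun a ha => by
    simp [hπ₁def, Submodule.projectionOnto_apply_of_mem_right hc.symm ha]
  have hπ₀mem : ∀ x : A, π₀ x ∈ A₀ := fun x => by
    simp [hπ₀def, Submodule.coe_mem]
  -- extensionality principle
  have hext : ∀ f g : A →ₗ[ℝ] A,
      (∀ a ∈ A₀, f a = g a) → (∀ b ∈ A₁, f b = g b) → f = g := by
    intro f g h0 h1
    ext x
    have hx : x ∈ A₀ ⊔ A₁ := hsum ▸ Submodule.mem_top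
    obtain ⟨a, ha, b, hb, rfl⟩ := Submodule.mem_sup.mp hx
    simp [map_add, h0 a ha, h1 b hb]
  -- membership in A₁ from orthogonality to A₀
  have mem1 : ∀ v : A, (∀ a ∈ A₀, h v a = 0) → v ∈ A₁ := by
    intro v hv
    have hvmem : v ∈ A₀ ⊔ A₁ := hsum ▸ Submodule.mem_top
    obtain ⟨p, hp, q, hq, rfl⟩ := Submodule.mem_sup.mp hvmem
    have h1 : h (p + q) p = 0 := hv p hp
    have h2 : h q p = 0 := by rw [hsymm]; exact horth p hp q hq
    have h3 : h p p = 0 := by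
      simp only [map_add, LinearMap.add_apply] at h1
      linarith
    have hp0 : p = 0 := by
      by_contra hne
      exact absurd h3 (ne_of_gt (hpos p hne))
    rw [hp0, zero_add]
    exact hq
  -- zero criterion in A₀
  have zero0 : ∀ d ∈ A₀, (∀ b ∈ A₀, h d b = 0) → d = 0 := by
    intro d hd hdb
    by_contra hne
    exact absurd (hdb d hd) (ne_of_gt (hpos d hne))
  -- multiplication mapping properties
  have hmul01 : ∀ x ∈ A₀, ∀ y ∈ A₁, mul x y ∈ A₁ := by
    intro x hx y hy
    apply mem1
    intro a ha
    rw [hcomm, hinv, hmul00 x hx a ha, map_zero]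
  have hmul10 : ∀ y ∈ A₁, ∀ a ∈ A₀, mul y a ∈ A₁ := by
    intro y hy a ha
    rw [hcomm]
    exact hmul01 a ha y hy
  -- polarization of the polar identity
  have hpol2 : ∀ a ∈ A₀, ∀ b ∈ A₀, ∀ y ∈ A₁,
      mul a (mul b y) + mul b (mul a y) = (2 * h a b) • y := by
    intro a ha b hb y hy
    have key := hpolar (a + b) (A₀.add_mem ha hb) y hy
    simp only [map_add, LinearMap.add_apply] at key
    rw [hpolar a ha y hy, hpolar b hb y hy] at key
    have hba : h b a = h a b := hsymm b a
    have e : mul a (mul b y) + mul b (mul a y)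
        = (h a a + h b a + (h a b + h b b)) • y - h a a • y - h b b • y := by
      rw [← key]; abel
    rw [e, hba, show h a a + h a b + (h a b + h b b)
        = 2 * h a b + (h a a + h b b) by ring, add_smul, add_smul]
    abel
  -- key: h (x₁∘(x₁∘a)) b = h a b * h x₁ x₁ for a b ∈ A₀
  have tval : ∀ a ∈ A₀, ∀ b ∈ A₀,
      h (mul x₁ (mul x₁ a)) b = h a b * h x₁ x₁ := by
    intro a ha b hb
    have step1 : h (mul x₁ (mul x₁ a)) b = h (mul x₁ a) (mul x₁ b) := by
      rw [hcomm x₁ (mul x₁ a)]; exact hinv (mul x₁ a) x₁ b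
    have step2 : h (mul x₁ a) (mul x₁ b) = h x₁ (mul a (mul b x₁)) := by
      rw [hinv x₁ a (mul x₁ b), hcomm x₁ b]
    have step3 : h x₁ (mul b (mul a x₁)) = h (mul x₁ a) (mul x₁ b) := by
      rw [← hinv x₁ b (mul a x₁), hcomm a x₁, hsymm]
    have step4 : h x₁ (mul a (mul b x₁)) + h x₁ (mul b (mul a x₁))
        = 2 * h a b * h x₁ x₁ := by
      rw [← map_add, hpol2 a ha b hb x₁ hx₁, map_smul, smul_eq_mul]
    linarith [step1, step2, step3, step4]
  -- key identity: x₁∘(x₁∘a) = h x₁ x₁ • a for a ∈ A₀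
  have key6 : ∀ a ∈ A₀, mul x₁ (mul x₁ a) = h x₁ x₁ • a := by
    intro a ha
    have hmem : mul x₁ (mul x₁ a) - h x₁ x₁ • a ∈ A₀ :=
      A₀.sub_mem (hmul11 x₁ hx₁ (mul x₁ a) (hmul10 x₁ hx₁ a ha))
        (A₀.smul_mem _ ha)
    have hz : mul x₁ (mul x₁ a) - h x₁ x₁ • a = 0 := by
      apply zero0 _ hmem
      intro b hb
      have : h (mul x₁ (mul x₁ a) - h x₁ x₁ • a) b
          = h (mul x₁ (mul x₁ a)) b - h x₁ x₁ * h a b := by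
        simp [map_sub, LinearMap.sub_apply, map_smul, LinearMap.smul_apply,
          smul_eq_mul]
      rw [this, tval a ha b hb]
      ring
    exact sub_eq_zero.mp hz
  -- operator identities
  have E0 : mul x₀ ∘ₗ mul x₀ = h x₀ x₀ • π₁ := by
    apply hext
    · intro a ha
      simp [LinearMap.comp_apply, hmul00 x₀ hx₀ a ha, hπ₁₀ a ha]
    · intro y hy
      simp [LinearMap.comp_apply, hpolar x₀ hx₀ y hy, hπ₁₁ y hy]
  have F1 : mul x₁ ∘ₗ (π₁ ∘ₗ mul x₁) = h x₁ x₁ • π₀ := by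
    apply hext
    · intro a ha
      simp [LinearMap.comp_apply, hπ₁₁ _ (hmul10 x₁ hx₁ a ha), key6 a ha,
        hπ₀₀ a ha]
    · intro y hy
      simp [LinearMap.comp_apply, hπ₁₀ _ (hmul11 x₁ hx₁ y hy), hπ₀₁ y hy]
  have G0 : π₀ ∘ₗ mul x₀ = 0 := by
    apply hext
    · intro a ha
      simp [LinearMap.comp_apply, hmul00 x₀ hx₀ a ha]
    · intro y hy
      simp [LinearMap.comp_apply, hπ₀₁ _ (hmul01 x₀ hx₀ y hy)]
  have H1 : mul x₀ ∘ₗ (mul x₁ ∘ₗ π₁) = 0 := by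
    apply hext
    · intro a ha
      simp [LinearMap.comp_apply, hπ₁₀ a ha]
    · intro y hy
      simp [LinearMap.comp_apply, hπ₁₁ y hy,
        hmul00 x₀ hx₀ _ (hmul11 x₁ hx₁ y hy)]
  have hid : π₀ + π₁ = LinearMap.id := by
    apply hext
    · intro a ha
      simp [LinearMap.add_apply, hπ₀₀ a ha, hπ₁₀ a ha]
    · intro y hy
      simp [LinearMap.add_apply, hπ₀₁ y hy, hπ₁₁ y hy]
  -- π₀ kills the image of F0
  have hF0 : π₀ ∘ₗ (mul x₁ ∘ₗ (π₀ ∘ₗ mul x₁)) = 0 := by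
    ext x
    simp only [LinearMap.comp_apply, LinearMap.zero_apply]
    exact hπ₀₁ _ (hmul10 x₁ hx₁ _ (hπ₀mem (mul x₁ x)))
  have hidem : π₀ ∘ₗ π₀ = π₀ := by
    apply hext
    · intro a ha
      simp [LinearMap.comp_apply, hπ₀₀ a ha]
    · intro y hy
      simp [LinearMap.comp_apply, hπ₀₁ y hy]
  -- traces of the projections
  have trπ₀ : LinearMap.trace ℝ A π₀ = (Module.finrank ℝ A₀ : ℝ) := by
    rw [hπ₀def, LinearMap.trace_comp_comm' (A₀.projectionOnto A₁ hc)
      A₀.subtype, Submodule.projectionOnto_comp_subtype,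
      LinearMap.trace_id]
  have trπ₁ : LinearMap.trace ℝ A π₁ = (Module.finrank ℝ A₁ : ℝ) := by
    rw [hπ₁def, LinearMap.trace_comp_comm'
      (A₁.projectionOnto A₀ hc.symm) A₁.subtype,
      Submodule.projectionOnto_comp_subtype, LinearMap.trace_id]
  -- the four trace contributions
  have T00 : LinearMap.trace ℝ A (mul x₀ ∘ₗ mul x₀)
      = h x₀ x₀ * (Module.finrank ℝ A₁ : ℝ) := by
    rw [E0, map_smul, trπ₁, smul_eq_mul]
  have T01 : LinearMap.trace ℝ A (mul x₀ ∘ₗ mul x₁) = 0 := by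
    have split : mul x₀ ∘ₗ mul x₁
        = mul x₀ ∘ₗ (mul x₁ ∘ₗ π₀) + mul x₀ ∘ₗ (mul x₁ ∘ₗ π₁) := by
      rw [← LinearMap.comp_add, ← LinearMap.comp_add, hid, LinearMap.comp_id]
    rw [split, map_add, H1, map_zero, add_zero]
    calc LinearMap.trace ℝ A (mul x₀ ∘ₗ (mul x₁ ∘ₗ π₀))
        = LinearMap.trace ℝ A ((mul x₁ ∘ₗ π₀) ∘ₗ mul x₀) :=
          LinearMap.trace_comp_comm' (mul x₁ ∘ₗ π₀) (mul x₀)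
      _ = LinearMap.trace ℝ A (mul x₁ ∘ₗ (π₀ ∘ₗ mul x₀)) := by
          rw [LinearMap.comp_assoc]
      _ = 0 := by rw [G0, LinearMap.comp_zero, map_zero]
  have T10 : LinearMap.trace ℝ A (mul x₁ ∘ₗ mul x₀) = 0 := by
    rw [LinearMap.trace_comp_comm']
    exact T01
  have T11 : LinearMap.trace ℝ A (mul x₁ ∘ₗ mul x₁)
      = 2 * h x₁ x₁ * (Module.finrank ℝ A₀ : ℝ) := by
    have split : mul x₁ ∘ₗ mul x₁
        = mul x₁ ∘ₗ (π₀ ∘ₗ mul x₁) + mul x₁ ∘ₗ (π₁ ∘ₗ mul x₁) := by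
      rw [← LinearMap.comp_add, ← LinearMap.add_comp, hid, LinearMap.id_comp]
    have trF1 : LinearMap.trace ℝ A (mul x₁ ∘ₗ (π₁ ∘ₗ mul x₁))
        = h x₁ x₁ * (Module.finrank ℝ A₀ : ℝ) := by
      rw [F1, map_smul, trπ₀, smul_eq_mul]
    have trF0 : LinearMap.trace ℝ A (mul x₁ ∘ₗ (π₀ ∘ₗ mul x₁))
        = h x₁ x₁ * (Module.finrank ℝ A₀ : ℝ) := by
      have c1 : LinearMap.trace ℝ A (mul x₁ ∘ₗ (π₀ ∘ₗ mul x₁))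
          = LinearMap.trace ℝ A ((π₀ ∘ₗ mul x₁) ∘ₗ mul x₁) :=
        LinearMap.trace_comp_comm' (π₀ ∘ₗ mul x₁) (mul x₁)
      have c2 : (π₀ ∘ₗ mul x₁) ∘ₗ mul x₁ = h x₁ x₁ • π₀ := by
        rw [LinearMap.comp_assoc, split, LinearMap.comp_add]
        rw [show π₀ ∘ₗ (mul x₁ ∘ₗ (π₀ ∘ₗ mul x₁)) = 0 from hF0, zero_add, F1]
        rw [show π₀ ∘ₗ (h x₁ x₁ • π₀) = h x₁ x₁ • (π₀ ∘ₗ π₀) from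
          LinearMap.comp_smul _ _ _, hidem]
      rw [c1, c2, map_smul, trπ₀, smul_eq_mul]
    rw [split, map_add, trF0, trF1]
    ring
  -- assemble
  have expand : mul (x₀ + x₁) ∘ₗ mul (x₀ + x₁)
      = (mul x₀ ∘ₗ mul x₀ + mul x₀ ∘ₗ mul x₁)
        + (mul x₁ ∘ₗ mul x₀ + mul x₁ ∘ₗ mul x₁) := by
    rw [map_add, LinearMap.add_comp, LinearMap.comp_add, LinearMap.comp_add]
  rw [expand, map_add, map_add, map_add, T00, T01, T10, T11]
  ring
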